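/- Let d > 0 and let f : (0,d) → ℝ satisfy 0 < f(x) < x for all x ∈ (0,d). Let α > 0 be such that for every ε > 0 one has lim_{x→0⁺} x^{α+ε}/(x − f(x)) = 0. Then for every ε > 0 with α + ε > 1 there exist n₀ ∈ ℕ and d₁ ∈ (0,d] such that for every x ∈ (0,d₁) and every n ≥ n₀ one has 0 < f^{∘n}(x) < x·(1 + (n/2)·x^{α+ε−1})^{−1/(α+ε−1)}. -/

import Mathlib

open Set Filter Real Topology

/-- Key one-step estimate: if `y ≤ x * (1 - (1 + 1/γ) * x ^ γ)` with everything small,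
then `x ^ (-γ) + 1 ≤ y ^ (-γ)`. -/
lemma key_step (γ : ℝ) (hγ : 0 < γ) {x y : ℝ} (hx : 0 < x)
    (hu : (1 + 1 / γ) * x ^ γ ≤ 1 / 2) (hy : 0 < y)
    (hyx : y ≤ x * (1 - (1 + 1 / γ) * x ^ γ)) :
    x ^ (-γ) + 1 ≤ y ^ (-γ) := by
  set C : ℝ := 1 + 1 / γ with hCdef
  have hC1 : 1 < C := by
    have : 0 < 1 / γ := by positivity
    simp [hCdef]; linarith
  set u : ℝ := x ^ γ with hudef
  have hu0 : 0 < u := Real.rpow_pos_of_pos hx γ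
  clear_value C u
  have hCu : 0 < 1 - C * u := by linarith
  -- main claim : (1 + u) * (1 - C*u) ^ γ ≤ 1
  have hclaim : (1 + u) * (1 - C * u) ^ γ ≤ 1 := by
    rcases le_or_gt γ 1 with hγ1 | hγ1
    · have hb : (1 - C * u) ^ γ ≤ 1 + γ * (-(C * u)) := by
        have := rpow_one_add_le_one_add_mul_self (s := -(C * u)) (by linarith)
          (p := γ) hγ.le hγ1
        simpa [← sub_eq_add_neg] using this
      have hγC : γ * C = γ + 1 := by
        rw [hCdef]
        field_simp
      have h1u : (0:ℝ) ≤ 1 + u := by linarith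
      calc (1 + u) * (1 - C * u) ^ γ ≤ (1 + u) * (1 + γ * (-(C * u))) := by
            apply mul_le_mul_of_nonneg_left hb h1u
        _ = 1 - γ * u - (γ + 1) * u ^ 2 := by
            have : γ * (C * u) = (γ + 1) * u := by rw [← mul_assoc, hγC]
            nlinarith [this]
        _ ≤ 1 := by nlinarith
    · have hb : (1 - C * u) ^ γ ≤ 1 - C * u := by
        have hCu0 : 0 < C * u := mul_pos (lt_trans zero_lt_one hC1) hu0
        have := Real.rpow_le_rpow_of_exponent_ge hCu (by linarith) hγ1.le
        simpa using this
      have h1u : (0:ℝ) ≤ 1 + u := by linarith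
      calc (1 + u) * (1 - C * u) ^ γ ≤ (1 + u) * (1 - C * u) := by
            apply mul_le_mul_of_nonneg_left hb h1u
        _ ≤ 1 := by
            have h5 : u < C * u := by nlinarith
            nlinarith [mul_pos (mul_pos (lt_trans zero_lt_one hC1) hu0) hu0]
  -- hence (1 + u) ≤ (1 - C*u) ^ (-γ)
  have hpow : (0:ℝ) < (1 - C * u) ^ γ := Real.rpow_pos_of_pos hCu γ
  have h2 : 1 + u ≤ (1 - C * u) ^ (-γ) := by
    rw [Real.rpow_neg hCu.le, ← one_div, le_div_iff₀ hpow]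
    exact hclaim
  -- now compare y ^ (-γ) with (x * (1 - C*u)) ^ (-γ)
  have hx1 : 0 < x * (1 - C * u) := mul_pos hx hCu
  have h3 : (x * (1 - C * u)) ^ (-γ) ≤ y ^ (-γ) :=
    Real.rpow_le_rpow_of_nonpos hy hyx (by linarith)
  have h4 : (x * (1 - C * u)) ^ (-γ) = x ^ (-γ) * (1 - C * u) ^ (-γ) :=
    Real.mul_rpow hx.le hCu.le
  have hxinv : x ^ (-γ) * u = 1 := by
    rw [hudef, Real.rpow_neg hx.le, inv_mul_cancel₀ (Real.rpow_pos_of_pos hx γ).ne']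
  have h5 : x ^ (-γ) + 1 ≤ x ^ (-γ) * (1 - C * u) ^ (-γ) := by
    have hxg : (0:ℝ) < x ^ (-γ) := Real.rpow_pos_of_pos hx _
    calc x ^ (-γ) + 1 = x ^ (-γ) * (1 + u) := by rw [mul_add, mul_one, hxinv]
      _ ≤ x ^ (-γ) * (1 - C * u) ^ (-γ) := by
          apply mul_le_mul_of_nonneg_left h2 hxg.le
  linarith [h4 ▸ h3]

/-- If `0 < f x < x` on `(0,d)` and for every `ε > 0` one has
`x^(α+ε)/(x - f x) → 0` as `x → 0⁺`, then for every `ε > 0` with `α + ε > 1`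
there are `n₀` and `d₁ ∈ (0,d]` such that
`0 < f^[n] x < x * (1 + (n/2) * x^(α+ε−1))^(−1/(α+ε−1))` for `x ∈ (0,d₁)`, `n ≥ n₀`. -/
theorem stmt0 (d : ℝ) (hd : 0 < d) (f : ℝ → ℝ)
    (hf : ∀ x ∈ Ioo 0 d, 0 < f x ∧ f x < x)
    (α : ℝ) (hα : 0 < α)
    (hlim : ∀ ε > (0 : ℝ),
      Tendsto (fun x => x ^ (α + ε) / (x - f x)) (𝓝[>] 0) (𝓝 0)) :
    ∀ ε > (0 : ℝ), 1 < α + ε →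
      ∃ n₀ : ℕ, ∃ d₁ : ℝ, 0 < d₁ ∧ d₁ ≤ d ∧
        ∀ x ∈ Ioo 0 d₁, ∀ n : ℕ, n₀ ≤ n →
          0 < f^[n] x ∧
          f^[n] x < x * (1 + (n / 2 : ℝ) * x ^ (α + ε - 1)) ^ (-(1 / (α + ε - 1))) := by
  intro ε hε hβ
  set γ : ℝ := α + ε - 1 with hγdef
  have hγ : 0 < γ := by simp [hγdef]; linarith
  set C : ℝ := 1 + 1 / γ with hCdef
  have hC0 : 0 < C := by positivity
  have hC1 : 1 < C := by
    have : 0 < 1 / γ := by positivity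
    simp [hCdef]; linarith
  clear_value C
  -- eventually x^(α+ε)/(x - f x) < 1/C
  have h1 : ∀ᶠ x in 𝓝[>] (0:ℝ), (fun x => x ^ (α + ε) / (x - f x)) x < 1 / C :=
    (hlim ε hε).eventually_lt_const (by positivity)
  rw [eventually_nhdsWithin_iff, Metric.eventually_nhds_iff] at h1
  obtain ⟨δ, hδ, h1⟩ := h1
  -- choose d₁
  set d₁ : ℝ := min d (min δ ((1 / (2 * C)) ^ (1 / γ))) with hd₁def
  have hd₁pos : 0 < d₁ := by
    apply lt_min hd
    apply lt_min hδ
    positivity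
  refine ⟨1, d₁, hd₁pos, min_le_left _ _, ?_⟩
  -- basic facts on (0, d₁)
  have hstep : ∀ x ∈ Ioo 0 d₁, 0 < f x ∧ f x < x ∧ C * x ^ γ ≤ 1 / 2 ∧
      f x ≤ x * (1 - C * x ^ γ) := by
    intro x hx
    obtain ⟨hx0, hxd₁⟩ := hx
    have hxd : x < d := lt_of_lt_of_le hxd₁ (min_le_left _ _)
    have hxδ : x < δ := lt_of_lt_of_le hxd₁ ((min_le_right _ _).trans (min_le_left _ _))
    have hxr : x < (1 / (2 * C)) ^ (1 / γ) :=
      lt_of_lt_of_le hxd₁ ((min_le_right _ _).trans (min_le_right _ _))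
    obtain ⟨hf0, hfx⟩ := hf x ⟨hx0, hxd⟩
    -- C * x^γ ≤ 1/2
    have hsmall : C * x ^ γ ≤ 1 / 2 := by
      have h2 : x ^ γ < ((1 / (2 * C)) ^ (1 / γ)) ^ γ :=
        Real.rpow_lt_rpow hx0.le hxr hγ
      have h3 : ((1 / (2 * C):ℝ) ^ (1 / γ)) ^ γ = 1 / (2 * C) := by
        rw [← Real.rpow_mul (by positivity), one_div_mul_cancel hγ.ne', Real.rpow_one]
      rw [h3] at h2
      calc C * x ^ γ ≤ C * (1 / (2 * C)) := by nlinarith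
        _ = 1 / 2 := by
            rw [mul_one_div]
            rw [div_eq_div_iff (by positivity) (by norm_num)]
            ring
    -- f x ≤ x * (1 - C * x^γ)
    have hdecr : f x ≤ x * (1 - C * x ^ γ) := by
      have hxf : 0 < x - f x := by linarith
      have h2 : x ^ (α + ε) / (x - f x) < 1 / C := by
        exact h1 (by simpa [Real.dist_eq, abs_of_pos hx0] using hxδ)
          (mem_Ioi.mpr hx0)
      have h3 : C * x ^ (α + ε) < x - f x := by
        rw [div_lt_div_iff₀ hxf hC0] at h2
        linarith
      have h4 : x ^ (α + ε) = x * x ^ γ := by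
        have : α + ε = 1 + γ := by rw [hγdef]; ring
        rw [this, Real.rpow_add hx0, Real.rpow_one]
      nlinarith [h3, h4]
    exact ⟨hf0, hfx, hsmall, hdecr⟩
  -- invariance + key inequality by induction
  have hinv : ∀ x ∈ Ioo 0 d₁, ∀ n : ℕ, f^[n] x ∈ Ioo 0 d₁ ∧
      x ^ (-γ) + n ≤ (f^[n] x) ^ (-γ) := by
    intro x hx n
    induction n with
    | zero => simpa using hx
    | succ n ih =>
      obtain ⟨hmem, hbound⟩ := ih
      obtain ⟨hy0, hyd₁⟩ := hmem
      set y : ℝ := f^[n] x with hydef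
      obtain ⟨hf0, hfy, hsmall, hdecr⟩ := hstep y ⟨hy0, hyd₁⟩
      have hkey : y ^ (-γ) + 1 ≤ (f y) ^ (-γ) :=
        key_step γ hγ hy0 (hCdef ▸ hsmall) hf0 (hCdef ▸ hdecr)
      rw [Function.iterate_succ_apply']
      constructor
      · exact ⟨hf0, lt_trans hfy hyd₁⟩
      · push_cast
        linarith
  -- conclusion
  intro x hx n hn
  obtain ⟨⟨hy0, hyd₁⟩, hbound⟩ := hinv x hx n
  obtain ⟨hx0, hxd₁⟩ := hx
  set y : ℝ := f^[n] x with hydef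
  refine ⟨hy0, ?_⟩
  have hn1 : (1:ℝ) ≤ n := by exact_mod_cast hn
  set B : ℝ := 1 + (n / 2 : ℝ) * x ^ γ with hBdef
  have hxγ : 0 < x ^ γ := Real.rpow_pos_of_pos hx0 γ
  have hB0 : 0 < B := by
    rw [hBdef]
    positivity
  set R : ℝ := x * B ^ (-(1 / γ)) with hRdef
  have hR0 : 0 < R := mul_pos hx0 (Real.rpow_pos_of_pos hB0 _)
  -- R ^ (-γ) = x ^ (-γ) + n/2
  have hRγ : R ^ (-γ) = x ^ (-γ) + n / 2 := by
    rw [hRdef, Real.mul_rpow hx0.le (Real.rpow_pos_of_pos hB0 _).le,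
      ← Real.rpow_mul hB0.le]
    have : -(1 / γ) * -γ = 1 := by field_simp
    rw [this, Real.rpow_one, hBdef]
    have hxinv : x ^ (-γ) * x ^ γ = 1 := by
      rw [Real.rpow_neg hx0.le, inv_mul_cancel₀ hxγ.ne']
    nlinarith [hxinv]
  -- strict comparison of the (-γ)-powers
  have hlt : R ^ (-γ) < y ^ (-γ) := by
    rw [hRγ]
    have : (n:ℝ) / 2 < n := by linarith
    linarith
  -- conclude y < R by applying t ↦ t ^ (-(1/γ))
  have hfin := Real.rpow_lt_rpow_of_neg (Real.rpow_pos_of_pos hR0 _) hlt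
    (neg_lt_zero.mpr (by positivity : (0:ℝ) < 1 / γ))
  have hone : -γ * -(1 / γ) = 1 := by field_simp
  have e1 : (y ^ (-γ)) ^ (-(1 / γ)) = y := by
    rw [← Real.rpow_mul hy0.le, hone, Real.rpow_one]
  have e2 : (R ^ (-γ)) ^ (-(1 / γ)) = R := by
    rw [← Real.rpow_mul hR0.le, hone, Real.rpow_one]
  rw [e1, e2] at hfin
  exact hfin
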